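/- (Binet formula for the matrix sequence) For a, b > 0 with α = (ab + √(a²b² + 8ab))/2 and β = (ab − √(a²b² + 8ab))/2, and for every n ≥ 0: J_n = A·(α^n − β^n) + B·(α^{2⌊n/2⌋+2} − β^{2⌊n/2⌋+2}), where A = (J_1 − b·J_0)^{ε(n)}·(a·J_1 − 2·J_0 − ab·J_0)^{1−ε(n)} / ((ab)^{⌊n/2⌋}·(α − β)) with the convention that for even n the factor is (a·J_1 − 2·J_0 − ab·J_0) and for odd n it is (J_1 − b·J_0), and B = b^{ε(n)}·J_0 / ((ab)^{⌊n/2⌋+1}·(α − β)), with ε(n) = 0 for even n and 1 for odd n. -/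
import Mathlib


noncomputable def JM (a b : ℝ) : ℕ → Matrix (Fin 2) (Fin 2) ℝ
  | 0 => 1
  | 1 => !![b, 2 * b / a; 1, 0]
  | n + 2 => (if Even (n + 2) then a else b) • JM a b (n + 1) + (2 : ℝ) • JM a b n
lemma keyL (a b α β : ℝ) (hsum : α + β = a * b) (hmul : α * β = -(2 * (a * b))) :
    ∀ m : ℕ,
      ((a*b)^m * (α - β)) • JM a b (2*m)
        = (a * (α^(2*m) - β^(2*m))) • JM a b 1 + (α * β^(2*m) - β * α^(2*m)) • JM a b 0
      ∧ ((a*b)^m * (α - β)) • JM a b (2*m+1)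
        = (α^(2*m+1) - β^(2*m+1)) • JM a b 1 + (2*b*(α^(2*m) - β^(2*m))) • JM a b 0 := by
  have hα2 : α^2 = a*b*α + 2*(a*b) := by linear_combination α * hsum - hmul
  have hβ2 : β^2 = a*b*β + 2*(a*b) := by linear_combination β * hsum - hmul
  intro m
  induction m with
  | zero =>
    constructor
    · simp only [pow_zero, Nat.mul_zero, one_mul]
      module
    · simp only [pow_zero, pow_one, Nat.mul_zero, one_mul, Nat.zero_add]
      module
  | succ m ih =>
    obtain ⟨ih1, ih2⟩ := ih
    have h1 : α^(2*m+2) = a*b*α^(2*m+1) + 2*(a*b)*α^(2*m) := by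
      linear_combination α^(2*m) * hα2
    have h2 : β^(2*m+2) = a*b*β^(2*m+1) + 2*(a*b)*β^(2*m) := by
      linear_combination β^(2*m) * hβ2
    have hrecE : JM a b (2*(m+1)) = a • JM a b (2*m+1) + (2:ℝ) • JM a b (2*m) := by
      rw [show 2*(m+1) = (2*m)+2 by ring, JM]
      simp [Nat.even_add, parity_simps]
    have stepE : ((a*b)^(m+1) * (α - β)) • JM a b (2*(m+1))
        = (a * (α^(2*(m+1)) - β^(2*(m+1)))) • JM a b 1
          + (α * β^(2*(m+1)) - β * α^(2*(m+1))) • JM a b 0 := by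
      rw [hrecE]
      have e1 : ((a*b)^(m+1) * (α - β)) • (a • JM a b (2*m+1) + (2:ℝ) • JM a b (2*m))
          = ((a*b)*a) • (((a*b)^m * (α - β)) • JM a b (2*m+1))
            + (2*(a*b)) • (((a*b)^m * (α - β)) • JM a b (2*m)) := by
        rw [smul_smul, smul_smul]
        match_scalars <;> ring
      rw [e1, ih1, ih2]
      match_scalars
      · linear_combination (-a*α^(2*m))*hα2 + (a*β^(2*m))*hβ2
      · linear_combination (β*α^(2*m))*hα2 - (α*β^(2*m))*hβ2 + (a*b*(α^(2*m)-β^(2*m)))*hmul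
    refine ⟨by rw [show 2*(m+1) = 2*m+2 by ring] at stepE ⊢; exact stepE, ?_⟩
    have h3 : α^(2*m+3) = a*b*α^(2*m+2) + 2*(a*b)*α^(2*m+1) := by
      linear_combination α^(2*m+1) * hα2
    have h4 : β^(2*m+3) = a*b*β^(2*m+2) + 2*(a*b)*β^(2*m+1) := by
      linear_combination β^(2*m+1) * hβ2
    have hrecO : JM a b (2*(m+1)+1) = b • JM a b (2*(m+1)) + (2:ℝ) • JM a b (2*m+1) := by
      rw [show 2*(m+1)+1 = (2*m+1)+2 by ring, JM]
      simp [Nat.even_add, parity_simps]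
      rw [show 2*m+1+1 = 2*(m+1) by ring]
    rw [hrecO]
    have e2 : ((a*b)^(m+1) * (α - β)) • (b • JM a b (2*(m+1)) + (2:ℝ) • JM a b (2*m+1))
        = b • (((a*b)^(m+1) * (α - β)) • JM a b (2*(m+1)))
          + (2*(a*b)) • (((a*b)^m * (α - β)) • JM a b (2*m+1)) := by
      rw [smul_smul, smul_smul]
      match_scalars <;> ring
    rw [e2, stepE, ih2]
    match_scalars
    · linear_combination (-α^(2*m+1))*hα2 + (β^(2*m+1))*hβ2
    · linear_combination (-(b*β+2*b)*α^(2*m))*hα2 + ((b*α+2*b)*β^(2*m))*hβ2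
        + (a*b^2*(β^(2*m)-α^(2*m)))*hmul + (2*a*b^2*(β^(2*m)-α^(2*m)))*hsum

theorem stmt19 (a b : ℝ) (ha : 0 < a) (hb : 0 < b) (n : ℕ)
    (α β : ℝ)
    (hα : α = (a * b + Real.sqrt (a ^ 2 * b ^ 2 + 8 * a * b)) / 2)
    (hβ : β = (a * b - Real.sqrt (a ^ 2 * b ^ 2 + 8 * a * b)) / 2)
    (A B : Matrix (Fin 2) (Fin 2) ℝ)
    (hA : A = ((a * b) ^ (n / 2) * (α - β))⁻¹ •
        (if Even n then a • JM a b 1 - (2 : ℝ) • JM a b 0 - (a * b) • JM a b 0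
         else JM a b 1 - b • JM a b 0))
    (hB : B = (b ^ (n % 2) / ((a * b) ^ (n / 2 + 1) * (α - β))) • JM a b 0) :
    JM a b n = (α ^ n - β ^ n) • A
        + (α ^ (2 * (n / 2) + 2) - β ^ (2 * (n / 2) + 2)) • B := by
  have hpos : (0:ℝ) < a ^ 2 * b ^ 2 + 8 * a * b := by positivity
  have hS : Real.sqrt (a ^ 2 * b ^ 2 + 8 * a * b) ^ 2 = a ^ 2 * b ^ 2 + 8 * a * b :=
    Real.sq_sqrt hpos.le
  have hsub : (0:ℝ) < α - β := by
    rw [hα, hβ]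
    have := Real.sqrt_pos.mpr hpos
    linarith
  have hsum : α + β = a * b := by rw [hα, hβ]; ring
  have hmul : α * β = -(2 * (a * b)) := by
    rw [hα, hβ]; linear_combination (-(1:ℝ)/4) * hS
  have hα2 : α^2 = a*b*α + 2*(a*b) := by linear_combination α * hsum - hmul
  have hβ2 : β^2 = a*b*β + 2*(a*b) := by linear_combination β * hsum - hmul
  have hab : a * b ≠ 0 := by positivity
  have hinv : a * b * (a * b)⁻¹ = 1 := mul_inv_cancel₀ hab
  rcases Nat.even_or_odd n with he | ho
  · obtain ⟨m, rfl⟩ : ∃ m, n = 2 * m := ⟨n / 2, by rcases he with ⟨k, hk⟩; omega⟩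
    have hd2 : 2 * m / 2 = m := by omega
    have hm2 : 2 * m % 2 = 0 := by omega
    rw [if_pos he] at hA
    rw [hm2, pow_zero, hd2] at hB
    rw [show (1:ℝ)/((a*b)^(m+1)*(α-β)) = (a*b)⁻¹ * ((a*b)^m*(α-β))⁻¹ by
      rw [one_div, show (a*b)^(m+1)*(α-β) = (a*b) * ((a*b)^m*(α-β)) by ring, mul_inv]] at hB
    rw [hd2] at hA ⊢
    have hDne : ((a*b)^m * (α - β)) ≠ 0 := by positivity
    have key := (keyL a b α β hsum hmul m).1
    rw [hA, hB, ← inv_smul_smul₀ hDne (JM a b (2*m)), key]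
    match_scalars
    · ring
    · linear_combination
        (-(α^(2*m)) * (a*b)⁻¹ * ((a*b)^m*(α-β))⁻¹) * hα2
        + ((β^(2*m)) * (a*b)⁻¹ * ((a*b)^m*(α-β))⁻¹) * hβ2
        - (((a*b)^m*(α-β))⁻¹ * (α*α^(2*m) + 2*α^(2*m) - β*β^(2*m) - 2*β^(2*m))) * hinv
        + (((a*b)^m*(α-β))⁻¹ * (β^(2*m) - α^(2*m))) * hsum
  · obtain ⟨m, rfl⟩ : ∃ m, n = 2 * m + 1 := ⟨n / 2, by rcases ho with ⟨k, hk⟩; omega⟩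
    have hd2 : (2 * m + 1) / 2 = m := by omega
    have hm2 : (2 * m + 1) % 2 = 1 := by omega
    rw [if_neg (by simp [Nat.even_iff, Nat.odd_iff.mp ho])] at hA
    rw [hm2, pow_one, hd2] at hB
    rw [show b/((a*b)^(m+1)*(α-β)) = b * ((a*b)⁻¹ * ((a*b)^m*(α-β))⁻¹) by
      rw [div_eq_mul_inv, show (a*b)^(m+1)*(α-β) = (a*b) * ((a*b)^m*(α-β)) by ring, mul_inv]] at hB
    rw [hd2] at hA ⊢
    have hDne : ((a*b)^m * (α - β)) ≠ 0 := by positivity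
    have key := (keyL a b α β hsum hmul m).2
    rw [hA, hB, ← inv_smul_smul₀ hDne (JM a b (2*m+1)), key]
    match_scalars
    · ring
    · linear_combination
        (-(α^(2*m)) * b * (a*b)⁻¹ * ((a*b)^m*(α-β))⁻¹) * hα2
        + ((β^(2*m)) * b * (a*b)⁻¹ * ((a*b)^m*(α-β))⁻¹) * hβ2
        - (b * ((a*b)^m*(α-β))⁻¹ * (α*α^(2*m) + 2*α^(2*m) - β*β^(2*m) - 2*β^(2*m))) * hinv
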